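/- Let C be a finite subset of ℂ, x ∈ ℂ, and M a positive integer. Then there exists a positive integer M′, depending only on M and on [ℚ(C,x):ℚ(x)]_alg, such that for every y ∈ ℂ that is algebraic over ℚ(x) and satisfies [ℚ(C,x,y):ℚ(C,x)] ≤ M, we have [ℚ(x,y):ℚ(x)] ≤ M′. -/

import Mathlib

set_option maxHeartbeats 1000000

open IntermediateField Polynomial Module


set_option synthInstance.maxHeartbeats 1000000

/-- The degree `[B : A]` of one subfield of `ℂ` over another (for `A ≤ B`), realized as
the `A`-dimension of the intermediate field generated by `B` over `A`. -/
noncomputable def sfDeg (A B : Subfield ℂ) : ℕ :=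
  Module.finrank A (IntermediateField.adjoin A (B : Set ℂ))

/-- `B` is a purely transcendental extension of `A` (inside `ℂ`): `B = A(T)` for a set `T`
algebraically independent over `A`. -/
def IsPurelyTranscendental (A B : Subfield ℂ) : Prop :=
  ∃ T : Set ℂ, AlgebraicIndependent A (fun t : T => (t : ℂ)) ∧
    B = Subfield.closure ((A : Set ℂ) ∪ T)

/-- `[B : A]_alg = m`: `m` is the smallest positive integer such that there is an
intermediate field `A ≤ K₀ ≤ B` with `K₀` purely transcendental over `A` and `[B : K₀] = m`. -/
def IsAlgDeg (A B : Subfield ℂ) (m : ℕ) : Prop :=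
  0 < m ∧
    (∃ K₀ : Subfield ℂ, A ≤ K₀ ∧ K₀ ≤ B ∧ IsPurelyTranscendental A K₀ ∧ sfDeg K₀ B = m) ∧
    ∀ m' : ℕ, 0 < m' →
      (∃ K₀ : Subfield ℂ, A ≤ K₀ ∧ K₀ ≤ B ∧ IsPurelyTranscendental A K₀ ∧ sfDeg K₀ B = m') →
      m ≤ m'


lemma irreducible_map_frac {F : Type*} [Field F] (ι : Type*) {f : Polynomial F}
    (hf : Irreducible f) (hm : f.Monic) :
    Irreducible (f.map (algebraMap F (FractionRing (MvPolynomial ι F)))) := by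
  have hp : Prime f := hf.prime
  have h2 : Prime (MvPolynomial.C f : MvPolynomial ι F[X]) := (MvPolynomial.prime_C_iff _).mpr hp
  let e : MvPolynomial ι F[X] ≃+* Polynomial (MvPolynomial ι F) :=
    ((MvPolynomial.optionEquivRight F ι).symm.trans (MvPolynomial.optionEquivLeft F ι)).toRingEquiv
  have hcomp : (e : MvPolynomial ι F[X] →+* Polynomial (MvPolynomial ι F)).comp
      (MvPolynomial.C) = Polynomial.mapRingHom (MvPolynomial.C) := by
    apply Polynomial.ringHom_ext
    · intro a
      show e (MvPolynomial.C (Polynomial.C a)) = _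
      have h1 : (MvPolynomial.optionEquivRight F ι).symm (MvPolynomial.C (Polynomial.C a))
          = MvPolynomial.C a := by
        rw [AlgEquiv.symm_apply_eq]
        simp [MvPolynomial.optionEquivRight]
      simp [e, h1, MvPolynomial.optionEquivLeft_C]
    · show e (MvPolynomial.C Polynomial.X) = _
      have h1 : (MvPolynomial.optionEquivRight F ι).symm (MvPolynomial.C Polynomial.X)
          = MvPolynomial.X none := by
        rw [AlgEquiv.symm_apply_eq]
        simp [MvPolynomial.optionEquivRight]
      simp [e, h1, MvPolynomial.optionEquivLeft_X_none]
  have h3 : e (MvPolynomial.C f) = f.map MvPolynomial.C := by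
    have := RingHom.congr_fun hcomp f
    simpa using this
  have h4 : Prime (f.map (MvPolynomial.C) : Polynomial (MvPolynomial ι F)) := by
    rw [← h3]
    exact (MulEquiv.prime_iff e.toMulEquiv).mpr h2
  have h5 : Irreducible (f.map (MvPolynomial.C : F →+* MvPolynomial ι F)) := h4.irreducible
  have h6 := ((hm.map (MvPolynomial.C : F →+* MvPolynomial ι F)).irreducible_iff_irreducible_map_fraction_map
    (K := FractionRing (MvPolynomial ι F))).mp h5
  rw [Polynomial.map_map] at h6
  have : (algebraMap (MvPolynomial ι F) (FractionRing (MvPolynomial ι F))).comp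
      (MvPolynomial.C) = algebraMap F (FractionRing (MvPolynomial ι F)) := by
    rw [← MvPolynomial.algebraMap_eq, ← IsScalarTower.algebraMap_eq]
  rwa [this] at h6

lemma minpoly_map_adjoin {F E : Type*} [Field F] [Field E] [Algebra F E] {ι : Type*}
    {t : ι → E} (hx : AlgebraicIndependent F t) {y : E} (hy : IsIntegral F y) :
    minpoly (IntermediateField.adjoin F (Set.range t)) y =
      (minpoly F y).map (algebraMap F (IntermediateField.adjoin F (Set.range t))) := by
  set E₀ := IntermediateField.adjoin F (Set.range t)
  set K := FractionRing (MvPolynomial ι F)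
  set f := minpoly F y with hf
  have hmono : (f.map (algebraMap F E₀)).Monic := (minpoly.monic hy).map _
  have h1 : Irreducible (f.map (algebraMap F K)) :=
    irreducible_map_frac ι (minpoly.irreducible hy) (minpoly.monic hy)
  let e := hx.aevalEquivField
  have hcomp : (e : K →+* E₀).comp (algebraMap F K) = algebraMap F E₀ := by
    ext a
    exact congrArg Subtype.val (e.commutes a)
  have h2 : f.map (algebraMap F E₀) = (f.map (algebraMap F K)).map (e : K →+* E₀) := by
    rw [Polynomial.map_map, hcomp]
  have hirr : Irreducible (f.map (algebraMap F E₀)) := by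
    rw [h2]
    exact ((MulEquiv.prime_iff (Polynomial.mapEquiv e.toRingEquiv).toMulEquiv).mpr h1.prime).irreducible
  have h0 : Polynomial.aeval y (f.map (algebraMap F E₀)) = 0 := by
    rw [aeval_map_algebraMap]
    exact minpoly.aeval F y
  exact (minpoly.eq_of_irreducible_of_monic hirr h0 hmono).symm

lemma tower_bound {F E : Type*} [Field F] [Field E] [Algebra F E]
    (L' : IntermediateField F E) [FiniteDimensional F L'] {y : E} (hy : IsIntegral F y) :
    finrank F F⟮y⟯ ≤ finrank F L' * finrank L' L'⟮y⟯ := by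
  have hyL : IsIntegral L' y := hy.tower_top
  haveI : FiniteDimensional L' L'⟮y⟯ := adjoin.finiteDimensional hyL
  set E' := (IntermediateField.adjoin L' {y}).restrictScalars F with hE'
  haveI : FiniteDimensional F E' := FiniteDimensional.trans F L' L'⟮y⟯
  have h1 : F⟮y⟯ ≤ E' := by
    rw [adjoin_le_iff]
    intro z hz
    rw [Set.mem_singleton_iff] at hz
    subst hz
    exact IntermediateField.subset_adjoin L' {z} rfl
  have h2 : finrank F F⟮y⟯ ≤ finrank F E' :=
    LinearMap.finrank_le_finrank_of_injective
      (f := (IntermediateField.inclusion h1).toLinearMap)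
      (IntermediateField.inclusion h1).injective
  have h3 : finrank F E' = finrank F L' * finrank L' L'⟮y⟯ := by
    rw [Module.finrank_mul_finrank F L' L'⟮y⟯]
    rfl
  omega

/-- Let `C ⊆ ℂ` be finite, `x ∈ ℂ`, `M` a positive integer. There is a positive integer
`M'` depending only on `M` and `[ℚ(C,x) : ℚ(x)]_alg` such that every `y ∈ ℂ` algebraic over
`ℚ(x)` with `[ℚ(C,x,y) : ℚ(C,x)] ≤ M` satisfies `[ℚ(x,y) : ℚ(x)] ≤ M'`. -/
theorem bounded_degree_descent (M : ℕ) (hM : 0 < M) (D : ℕ) :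
    ∃ M' : ℕ, 0 < M' ∧
      ∀ (C : Set ℂ), C.Finite → ∀ x : ℂ,
        IsAlgDeg (Subfield.closure ({x} : Set ℂ)) (Subfield.closure (C ∪ {x})) D →
        ∀ y : ℂ, IsAlgebraic (Subfield.closure ({x} : Set ℂ)) y →
          Module.finrank (Subfield.closure (C ∪ {x}))
              (IntermediateField.adjoin (Subfield.closure (C ∪ {x})) {y}) ≤ M →
          Module.finrank (Subfield.closure ({x} : Set ℂ))
              (IntermediateField.adjoin (Subfield.closure ({x} : Set ℂ)) {y}) ≤ M' := by
  refine ⟨max (D * M) 1, lt_of_lt_of_le one_pos (le_max_right _ _), ?_⟩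
  intro C hC x hAlg y hy hM2
  obtain ⟨hD, ⟨K₀, hAK, hKL, ⟨T, hT, hK0eq⟩, hdeg⟩, -⟩ := hAlg
  set A := Subfield.closure ({x} : Set ℂ) with hA
  set L := Subfield.closure (C ∪ {x}) with hL
  have hyint : IsIntegral ↥A y := hy.isIntegral
  set E₀ := IntermediateField.adjoin ↥A (Set.range (fun t : T => (t : ℂ))) with hE₀
  have hrange : Set.range (fun t : T => (t : ℂ)) = T := Subtype.range_coe
  have hBK : K₀ = E₀.toSubfield := by
    have hrangeA : Set.range (algebraMap ↥A ℂ) = (A : Set ℂ) := by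
      ext z
      constructor
      · rintro ⟨a, rfl⟩; exact a.2
      · intro hz; exact ⟨⟨z, hz⟩, rfl⟩
    rw [hK0eq, hE₀, IntermediateField.adjoin_toSubfield, hrange, hrangeA]
  have key := minpoly_map_adjoin hT hyint
  have natdeg : (minpoly ↥E₀ y).natDegree = (minpoly ↥A y).natDegree := by
    rw [key]
    exact (minpoly.monic hyint).natDegree_map _
  have hfinpos : 0 < finrank ↥K₀ (IntermediateField.adjoin ↥K₀ (L : Set ℂ)) := by
    rw [show finrank ↥K₀ (IntermediateField.adjoin ↥K₀ (L : Set ℂ)) = sfDeg K₀ L from rfl, hdeg]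
    exact hD
  haveI : FiniteDimensional ↥K₀ (IntermediateField.adjoin ↥K₀ (L : Set ℂ)) := by
    by_contra hinf
    rw [Module.finrank_of_infinite_dimensional hinf] at hfinpos
    exact lt_irrefl 0 hfinpos
  have hyE : IsIntegral ↥E₀ y := hyint.tower_top
  have hyB : IsIntegral ↥K₀ y := by rw [hBK]; exact hyE
  have tower := tower_bound (IntermediateField.adjoin ↥K₀ (L : Set ℂ)) hyB
  have hLL : (IntermediateField.adjoin ↥K₀ (L : Set ℂ)).toSubfield = L := by
    rw [IntermediateField.adjoin_toSubfield]
    apply le_antisymm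
    · apply (Subfield.closure_le).mpr
      rintro z (⟨a, rfl⟩ | hz)
      · exact hKL a.2
      · exact hz
    · intro z hz
      exact Subfield.subset_closure (Or.inr hz)
  set L'' := IntermediateField.adjoin ↥K₀ (L : Set ℂ) with hL''
  have hM2' : finrank ↥(L''.toSubfield) (IntermediateField.adjoin ↥(L''.toSubfield) {y}) ≤ M := by
    rw [hLL]; exact hM2
  have hM2'' : finrank ↥L'' (IntermediateField.adjoin ↥L'' {y}) ≤ M := hM2'
  have g1 : finrank ↥A (IntermediateField.adjoin ↥A {y}) = (minpoly ↥A y).natDegree :=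
    adjoin.finrank hyint
  have g2 : finrank ↥K₀ (IntermediateField.adjoin ↥K₀ {y}) = (minpoly ↥K₀ y).natDegree :=
    adjoin.finrank hyB
  have g3 : (minpoly ↥K₀ y).natDegree = (minpoly ↥E₀ y).natDegree := by
    rw [hBK]
    rfl
  have hdegK : finrank ↥K₀ (IntermediateField.adjoin ↥K₀ (L : Set ℂ)) = D := hdeg
  calc finrank ↥A (IntermediateField.adjoin ↥A {y})
      = (minpoly ↥K₀ y).natDegree := by rw [g1, g3, natdeg]
    _ = finrank ↥K₀ (IntermediateField.adjoin ↥K₀ {y}) := g2.symm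
    _ ≤ finrank ↥K₀ L'' * finrank ↥L'' (IntermediateField.adjoin ↥L'' {y}) := tower
    _ ≤ D * M := by
        rw [show finrank ↥K₀ ↥L'' = D from hdegK]
        exact Nat.mul_le_mul_left D hM2''
    _ ≤ max (D * M) 1 := le_max_left _ _
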